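/- arXiv:2101.04606 — 2 statements merged into one kernel-verified Lean document; each statement's English description precedes it below -/
import Mathlib

section
/- Let $d \geq 2$, $s \in \{\pm1\}^d$, and let $\alpha(s_1e_1),\dots,\alpha(s_de_d)$ be strictly positive reals. Define $\psi : \mathbb{R}^{d-1} \to \mathbb{R}$ by $\psi(\theta) = \sum_{i=1}^{d-1} \alpha(s_i e_i) e^{\theta_i} + \alpha(s_d e_d) e^{-(\theta_1 + \cdots + \theta_{d-1})}$. Then for any $x = \sum_{i=1}^d \delta_i s_i e_i$ with $\delta_i > 0$ for all $i$ and $\sum_{i=1}^d \delta_i = 1$, the choice $\theta_i(x) = \log\big(\frac{\delta_i C}{\alpha(s_ie_i)}\big)$ for $i=1,\dots,d-1$, where $C = \big(\prod_{i=1}^d \frac{\alpha(s_ie_i)}{\delta_i}\big)^{1/d}$, satisfies $\frac{\partial}{\partial \theta_i} \log\psi(\theta(x)) = \delta_i - \delta_d$ for each $i = 1,\dots,d-1$. -/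
open Finset

/-- Explicit solvability of the gradient equation `∇ log ψ (θ(x)) = π(x)`:
with `θ_i(x) = log(δ_i C / α_i)` and `C = (∏ α_i/δ_i)^{1/d}`, each partial derivative
of `log ψ` at `θ(x)` equals `δ_i - δ_d`.  Here `d = m + 1`. -/
theorem stmt7 (m : ℕ) (hm : 1 ≤ m) (α δ : Fin (m+1) → ℝ)
    (hα : ∀ i, 0 < α i) (hδ : ∀ i, 0 < δ i) (hsum : ∑ i, δ i = 1) :
    let ψ : (Fin m → ℝ) → ℝ := fun θ =>
      ∑ i : Fin m, α i.castSucc * Real.exp (θ i) +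
        α (Fin.last m) * Real.exp (-∑ i, θ i)
    let C : ℝ := (∏ i, α i / δ i) ^ ((1 : ℝ) / (m + 1))
    let θx : Fin m → ℝ := fun i => Real.log (δ i.castSucc * C / α i.castSucc)
    ∀ i : Fin m, fderiv ℝ (fun θ => Real.log (ψ θ)) θx (Pi.single i 1) =
      δ i.castSucc - δ (Fin.last m) := by
  intro ψ C θx i
  have hX : 0 < ∏ j, α j / δ j := Finset.prod_pos fun j _ => div_pos (hα j) (hδ j)
  have hC : 0 < C := Real.rpow_pos_of_pos hX _
  have harg : ∀ j : Fin m, 0 < δ j.castSucc * C / α j.castSucc := fun j =>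
    div_pos (mul_pos (hδ _) hC) (hα _)
  have hCpow : C ^ (m + 1) = ∏ j, α j / δ j := by
    have h0 : C ^ (m + 1 : ℕ) = ((∏ j, α j / δ j) ^ ((1 : ℝ) / (m + 1))) ^ ((m+1 : ℕ) : ℝ) := by
      rw [Real.rpow_natCast]
    rw [h0, ← Real.rpow_mul hX.le]
    have h1 : (1 : ℝ) / (m + 1) * ((m + 1 : ℕ) : ℝ) = 1 := by
      push_cast
      field_simp
    rw [h1, Real.rpow_one]
  have ha : ∀ j : Fin m, α j.castSucc * Real.exp (θx j) = δ j.castSucc * C := by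
    intro j
    rw [show θx j = Real.log (δ j.castSucc * C / α j.castSucc) from rfl,
      Real.exp_log (harg j), mul_comm, div_mul_cancel₀ _ (hα _).ne']
  have hb : α (Fin.last m) * Real.exp (-∑ j, θx j) = δ (Fin.last m) * C := by
    have hprod : Real.exp (∑ j, θx j) = ∏ j : Fin m, δ j.castSucc * C / α j.castSucc := by
      rw [Real.exp_sum]
      exact Finset.prod_congr rfl fun j _ => Real.exp_log (harg j)
    have hsplit : (∏ j, α j / δ j) =
        (∏ j : Fin m, α j.castSucc / δ j.castSucc) * (α (Fin.last m) / δ (Fin.last m)) := by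
      rw [Fin.prod_univ_castSucc]
    have hP : 0 < ∏ j : Fin m, δ j.castSucc * C / α j.castSucc :=
      Finset.prod_pos fun j _ => harg j
    rw [Real.exp_neg, hprod]
    set A : ℝ := ∏ j : Fin m, α j.castSucc / δ j.castSucc with hA
    set B : ℝ := ∏ j : Fin m, δ j.castSucc / α j.castSucc with hB
    have key : (∏ j : Fin m, δ j.castSucc * C / α j.castSucc) *
        (δ (Fin.last m) * C) = α (Fin.last m) := by
      have expand : (∏ j : Fin m, δ j.castSucc * C / α j.castSucc) = C ^ m * B := by
        calc (∏ j : Fin m, δ j.castSucc * C / α j.castSucc)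
            = ∏ j : Fin m, C * (δ j.castSucc / α j.castSucc) := by
              exact Finset.prod_congr rfl fun j _ => by ring
          _ = (∏ _j : Fin m, C) * B := Finset.prod_mul_distrib
          _ = C ^ m * B := by rw [Finset.prod_const, Finset.card_fin]
      have inv_prod : B * A = 1 := by
        rw [hA, hB, ← Finset.prod_mul_distrib]
        refine Finset.prod_eq_one fun j _ => by
          rw [div_mul_div_comm, mul_comm, div_self
            (mul_ne_zero (hα _).ne' (hδ _).ne')]
      have hC1 : C ^ (m + 1) = A * (α (Fin.last m) / δ (Fin.last m)) := by
        rw [hCpow, hsplit]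
      have hCm : C ^ (m + 1) = C ^ m * C := by ring
      calc (∏ j : Fin m, δ j.castSucc * C / α j.castSucc) * (δ (Fin.last m) * C)
          = (C ^ m * C) * B * δ (Fin.last m) := by rw [expand]; ring
        _ = (A * (α (Fin.last m) / δ (Fin.last m))) * B * δ (Fin.last m) := by
            rw [← hCm, hC1]
        _ = (B * A) * (α (Fin.last m) / δ (Fin.last m) * δ (Fin.last m)) := by ring
        _ = α (Fin.last m) := by
            rw [inv_prod, one_mul, div_mul_cancel₀ _ (hδ _).ne']
    rw [← key, mul_comm]
    exact inv_mul_cancel_left₀ hP.ne' _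
  have hψval : ψ θx = C := by
    show (∑ j : Fin m, α j.castSucc * Real.exp (θx j)) +
      α (Fin.last m) * Real.exp (-∑ j, θx j) = C
    rw [hb, Finset.sum_congr rfl fun j _ => ha j]
    have h2 : (∑ j : Fin m, δ j.castSucc * C) + δ (Fin.last m) * C =
        (∑ j, δ j) * C := by
      rw [Fin.sum_univ_castSucc, add_mul, Finset.sum_mul]
    rw [h2, hsum, one_mul]
  -- derivative of ψ
  set S : (Fin m → ℝ) →L[ℝ] ℝ :=
    ∑ j : Fin m, ContinuousLinearMap.proj (R := ℝ) (φ := fun _ : Fin m => ℝ) j with hS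
  set L : (Fin m → ℝ) →L[ℝ] ℝ :=
    (∑ j : Fin m, (α j.castSucc * Real.exp (θx j)) •
      ContinuousLinearMap.proj (R := ℝ) (φ := fun _ : Fin m => ℝ) j) +
    (-(α (Fin.last m) * Real.exp (-∑ j, θx j))) • S with hL
  have hSapp : ∀ θ : Fin m → ℝ, S θ = ∑ j, θ j := by
    intro θ
    simp [hS, ContinuousLinearMap.sum_apply]
  have hψderiv : HasFDerivAt ψ L θx := by
    refine HasFDerivAt.add (HasFDerivAt.fun_sum fun j _ => ?_) ?_
    · have h1 : HasFDerivAt (fun θ : Fin m → ℝ => θ j)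
        (ContinuousLinearMap.proj (R := ℝ) (φ := fun _ : Fin m => ℝ) j) θx :=
        (ContinuousLinearMap.proj (R := ℝ) (φ := fun _ : Fin m => ℝ) j).hasFDerivAt
      have h2 := (Real.hasDerivAt_exp (θx j)).comp_hasFDerivAt θx h1
      have h3 := h2.const_mul (α j.castSucc)
      convert h3 using 1
      · rfl
      · rfl
      rw [smul_smul]
    · have h1 : HasFDerivAt (fun θ : Fin m → ℝ => S θ) S θx := S.hasFDerivAt
      have h2 : HasFDerivAt (fun θ : Fin m → ℝ => -∑ j, θ j) (-S) θx := by
        refine h1.neg.congr_of_eventuallyEq (Filter.Eventually.of_forall fun θ => ?_)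
        simp [hSapp]
      have h3 := (Real.hasDerivAt_exp (-∑ j, θx j)).comp_hasFDerivAt θx h2
      have h4 := h3.const_mul (α (Fin.last m))
      convert h4 using 1
      · rfl
      · rfl
      module
  have hne : ψ θx ≠ 0 := by rw [hψval]; exact hC.ne'
  have hlog : HasFDerivAt (fun θ => Real.log (ψ θ)) ((ψ θx)⁻¹ • L) θx :=
    hψderiv.log hne
  rw [hlog.fderiv]
  have hLapp : L (Pi.single i 1) =
      α i.castSucc * Real.exp (θx i) - α (Fin.last m) * Real.exp (-∑ j, θx j) := by
    rw [hL]
    simp only [ContinuousLinearMap.add_apply, ContinuousLinearMap.sum_apply,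
      ContinuousLinearMap.smul_apply, ContinuousLinearMap.proj_apply, smul_eq_mul]
    rw [hSapp, Finset.sum_pi_single']
    simp only [Finset.mem_univ, if_true]
    have h5 : ∑ j : Fin m, α j.castSucc * Real.exp (θx j) * (Pi.single i 1 : Fin m → ℝ) j =
        α i.castSucc * Real.exp (θx i) := by
      rw [Finset.sum_eq_single i]
      · simp
      · intro j _ hj
        simp [Pi.single_apply, hj]
      · intro h; exact absurd (Finset.mem_univ i) h
    rw [h5]; ring
  rw [ContinuousLinearMap.smul_apply, hLapp, ha, hb, hψval, smul_eq_mul]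
  field_simp
end

section
/- Let $d \geq 2$ and let $\alpha(e) > 0$ for each of the $2d$ signed unit vectors $e \in \{\pm e_1,\dots,\pm e_d\}$, with $\sum_e \alpha(e) = 1$. Define $\lambda(\theta) = \sum_e \alpha(e) e^{\langle\theta,e\rangle}$ for $\theta \in \mathbb{R}^d$. Then for every $x \in \mathbb{R}^d$ with $|x|_1 = 1$, $\sup_{\theta\in\mathbb{R}^d}\big(\langle\theta,x\rangle - \log\lambda(\theta)\big) = \sum_{i=1}^d |x_i| \log\frac{|x_i|}{\alpha(\frac{x_i}{|x_i|}e_i)}$, with the convention $0\log 0 = 0$ whenever $x_i = 0$. -/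
open Finset

/-- Upper bound: for every `θ`, `⟨θ,x⟩ - log λ(θ) ≤ R`. -/
lemma stmt17_ub (d : ℕ) (hd : 2 ≤ d) (αp αm : Fin d → ℝ)
    (hp : ∀ i, 0 < αp i) (hm : ∀ i, 0 < αm i)
    (x : Fin d → ℝ) (hx : ∑ i, |x i| = 1) (θ : Fin d → ℝ) :
    (∑ i, θ i * x i -
        Real.log (∑ i, (αp i * Real.exp (θ i) + αm i * Real.exp (-θ i)))) ≤
      ∑ i, |x i| * Real.log (|x i| / (if 0 ≤ x i then αp i else αm i)) := by
  haveI : Nonempty (Fin d) := ⟨⟨0, by omega⟩⟩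
  set α : Fin d → ℝ := fun i => if 0 ≤ x i then αp i else αm i with hαdef
  have hα : ∀ i, 0 < α i := by
    intro i; simp only [hαdef]; split
    · exact hp i
    · exact hm i
  set a : Fin d → ℝ := fun i => if 0 ≤ x i then θ i else -θ i with hadef
  set z : Fin d → ℝ := fun i => Real.exp (a i - Real.log (|x i| / α i)) with hzdef
  have hlampos : 0 < ∑ i, (αp i * Real.exp (θ i) + αm i * Real.exp (-θ i)) := by
    apply Finset.sum_pos _ Finset.univ_nonempty
    intro i _
    have h1 := hp i; have h2 := hm i
    positivity
  have key : Real.exp (∑ i, θ i * x i -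
      ∑ i, |x i| * Real.log (|x i| / α i)) ≤
      ∑ i, (αp i * Real.exp (θ i) + αm i * Real.exp (-θ i)) := by
    have h1 : (∑ i, θ i * x i - ∑ i, |x i| * Real.log (|x i| / α i)) =
        ∑ i, |x i| * (a i - Real.log (|x i| / α i)) := by
      rw [← Finset.sum_sub_distrib]
      apply Finset.sum_congr rfl
      intro i _
      have : θ i * x i = |x i| * a i := by
        simp only [hadef]
        rcases le_or_gt 0 (x i) with h | h
        · rw [if_pos h, abs_of_nonneg h]; ring
        · rw [if_neg (not_le.mpr h), abs_of_neg h]; ring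
      rw [this]; ring
    rw [h1, Real.exp_sum]
    have h2 : ∀ i ∈ Finset.univ, Real.exp (|x i| * (a i - Real.log (|x i| / α i)))
        = z i ^ (|x i|) := by
      intro i _
      simp only [hzdef]
      rw [Real.rpow_def_of_pos (Real.exp_pos _), Real.log_exp]
      ring_nf
    calc ∏ i, Real.exp (|x i| * (a i - Real.log (|x i| / α i)))
        = ∏ i, z i ^ (|x i|) := Finset.prod_congr rfl h2
      _ ≤ ∑ i, |x i| * z i := Real.geom_mean_le_arith_mean_weighted _ _ _
          (fun i _ => abs_nonneg _) hx (fun i _ => (Real.exp_pos _).le)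
      _ ≤ ∑ i, (αp i * Real.exp (θ i) + αm i * Real.exp (-θ i)) := by
          apply Finset.sum_le_sum
          intro i _
          rcases eq_or_ne (x i) 0 with h0 | h0
          · rw [h0, abs_zero, zero_mul]
            have h1 := hp i; have h2 := hm i
            positivity
          · have hxi : 0 < |x i| := abs_pos.mpr h0
            have hai := hα i
            have hzi : |x i| * z i = α i * Real.exp (a i) := by
              simp only [hzdef]
              rw [Real.exp_sub, Real.exp_log (by positivity)]
              field_simp
            rw [hzi]
            simp only [hαdef, hadef]
            rcases le_or_gt 0 (x i) with h | h
            · rw [if_pos h, if_pos h]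
              nlinarith [Real.exp_pos (-θ i), (hm i)]
            · rw [if_neg (not_le.mpr h), if_neg (not_le.mpr h)]
              nlinarith [Real.exp_pos (θ i), (hp i)]
  have := (Real.le_log_iff_exp_le hlampos).mpr key
  simp only [hαdef] at this ⊢
  linarith

/-- Lower bound: an explicit near-maximizer. -/
lemma stmt17_lb (d : ℕ) (hd : 2 ≤ d) (αp αm : Fin d → ℝ)
    (hp : ∀ i, 0 < αp i) (hm : ∀ i, 0 < αm i)
    (x : Fin d → ℝ) (hx : ∑ i, |x i| = 1) (ε : ℝ) (hε : 0 < ε) :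
    ∃ θ : Fin d → ℝ,
      (∑ i, |x i| * Real.log (|x i| / (if 0 ≤ x i then αp i else αm i))) - ε ≤
      (∑ i, θ i * x i -
        Real.log (∑ i, (αp i * Real.exp (θ i) + αm i * Real.exp (-θ i)))) := by
  haveI : Nonempty (Fin d) := ⟨⟨0, by omega⟩⟩
  set α : Fin d → ℝ := fun i => if 0 ≤ x i then αp i else αm i with hαdef
  have hα : ∀ i, 0 < α i := by
    intro i; simp only [hαdef]; split
    · exact hp i
    · exact hm i
  set R : ℝ := ∑ i, |x i| * Real.log (|x i| / α i) with hRdef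
  set C : ℝ := ∑ i, (if x i = 0 then αp i + αm i else αp i * αm i / |x i|) with hCdef
  have hC : 0 ≤ C := by
    apply Finset.sum_nonneg
    intro i _
    split_ifs with h
    · nlinarith [hp i, hm i]
    · have h0 : 0 < |x i| := abs_pos.mpr h
      have h1 := hp i; have h2 := hm i
      positivity
  set N : ℝ := max 0 (Real.log ((C + 1) / ε)) with hNdef
  have hN0 : 0 ≤ N := le_max_left _ _
  have hNε : C * Real.exp (-N) ≤ ε := by
    have h1 : Real.exp (-N) ≤ Real.exp (-(Real.log ((C + 1) / ε))) :=
      Real.exp_le_exp.mpr (neg_le_neg (le_max_right _ _))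
    have h2 : Real.exp (-(Real.log ((C + 1) / ε))) = ε / (C + 1) := by
      rw [Real.exp_neg, Real.exp_log (by positivity)]
      rw [inv_div]
    have h3 : C * Real.exp (-N) ≤ (C + 1) * (ε / (C + 1)) := by
      have := (Real.exp_pos (-N)).le
      nlinarith [Real.exp_pos (-N)]
    rw [mul_div_cancel₀ _ (by positivity : C + 1 ≠ 0)] at h3
    exact h3
  set θ : Fin d → ℝ := fun i => if x i = 0 then 0 else
      (if 0 ≤ x i then 1 else -1) * (N + Real.log (|x i| / α i)) with hθdef
  refine ⟨θ, ?_⟩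
  -- inner product
  have hip : ∑ i, θ i * x i = N + R := by
    have : ∀ i ∈ Finset.univ, θ i * x i = |x i| * N + |x i| * Real.log (|x i| / α i) := by
      intro i _
      rcases eq_or_ne (x i) 0 with h0 | h0
      · simp [hθdef, h0]
      · simp only [hθdef, if_neg h0]
        rcases le_or_gt 0 (x i) with h | h
        · rw [if_pos h, abs_of_nonneg h]; ring
        · rw [if_neg (not_le.mpr h), abs_of_neg h]; ring
    rw [Finset.sum_congr rfl this, Finset.sum_add_distrib, ← Finset.sum_mul, hx, one_mul,
      hRdef]
  -- the value of λ at θ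
  have hlam : ∑ i, (αp i * Real.exp (θ i) + αm i * Real.exp (-θ i)) =
      Real.exp N + ∑ i, (if x i = 0 then αp i + αm i
        else αp i * αm i / |x i| * Real.exp (-N)) := by
    have hterm : ∀ i ∈ Finset.univ, αp i * Real.exp (θ i) + αm i * Real.exp (-θ i) =
        |x i| * Real.exp N + (if x i = 0 then αp i + αm i
          else αp i * αm i / |x i| * Real.exp (-N)) := by
      intro i _
      rcases eq_or_ne (x i) 0 with h0 | h0
      · simp [hθdef, h0]
      · have hxi : 0 < |x i| := abs_pos.mpr h0
        rw [if_neg h0]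
        simp only [hθdef, if_neg h0]
        have hai := hα i
        have hp' := (hp i).ne'
        have hm' := (hm i).ne'
        have hx' := hxi.ne'
        have hexplog : Real.exp (Real.log (|x i| / α i)) = |x i| / α i :=
          Real.exp_log (by positivity)
        have hexplog' : Real.exp (-Real.log (|x i| / α i)) = α i / |x i| := by
          rw [Real.exp_neg, hexplog, inv_div]
        rcases le_or_gt 0 (x i) with h | h
        · have hαi : α i = αp i := by simp [hαdef, h]
          rw [if_pos h, one_mul, Real.exp_add, neg_add, Real.exp_add, hexplog, hexplog',
            hαi]
          field_simp
        · have hαi : α i = αm i := by simp [hαdef, not_le.mpr h]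
          rw [if_neg (not_le.mpr h), neg_one_mul, neg_neg, Real.exp_add, neg_add,
            Real.exp_add, hexplog, hexplog']
          rw [hαi]
          field_simp
          ring
    rw [Finset.sum_congr rfl hterm, Finset.sum_add_distrib, ← Finset.sum_mul, hx, one_mul]
  set D : ℝ := ∑ i, (if x i = 0 then αp i + αm i
      else αp i * αm i / |x i| * Real.exp (-N)) with hDdef
  have hD0 : 0 ≤ D := by
    apply Finset.sum_nonneg
    intro i _
    split_ifs with h
    · nlinarith [hp i, hm i]
    · have h0 : 0 < |x i| := abs_pos.mpr h
      have h1 := hp i; have h2 := hm i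
      positivity
  have hDC : D ≤ C := by
    apply Finset.sum_le_sum
    intro i _
    split_ifs with h
    · exact le_refl _
    · have hxi : 0 < |x i| := abs_pos.mpr h
      have hexp : Real.exp (-N) ≤ 1 := Real.exp_le_one_iff.mpr (by linarith)
      have hp1 := hp i; have hm1 := hm i
      have hpos : 0 < αp i * αm i / |x i| := by positivity
      nlinarith
  have hlog : Real.log (Real.exp N + D) ≤ N + C * Real.exp (-N) := by
    rw [Real.log_le_iff_le_exp (by positivity)]
    rw [Real.exp_add]
    have h1 : C * Real.exp (-N) + 1 ≤ Real.exp (C * Real.exp (-N)) :=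
      Real.add_one_le_exp _
    have h2 : Real.exp N * (C * Real.exp (-N) + 1) = C + Real.exp N := by
      rw [mul_add, mul_one, ← mul_assoc, mul_comm (Real.exp N) C, mul_assoc,
        ← Real.exp_add]
      simp
    nlinarith [Real.exp_pos N, hDC]
  rw [hip, hlam]
  have : R - ε ≤ N + R - (N + C * Real.exp (-N)) := by linarith
  calc R - ε ≤ N + R - (N + C * Real.exp (-N)) := this
    _ ≤ N + R - Real.log (Real.exp N + D) := by linarith

/-- Evaluation of the Fenchel–Legendre transform of `log λ` at boundary points of the
unit `ℓ¹`-ball: for `|x|₁ = 1`,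
`sup_θ (⟨θ,x⟩ - log λ(θ)) = ∑ᵢ |xᵢ| log(|xᵢ|/α(sign(xᵢ) eᵢ))` (with `0 log 0 = 0`).
The weight of `+eᵢ` is `αp i`, that of `-eᵢ` is `αm i`. -/
theorem stmt17 (d : ℕ) (hd : 2 ≤ d) (αp αm : Fin d → ℝ)
    (hp : ∀ i, 0 < αp i) (hm : ∀ i, 0 < αm i)
    (hsum : ∑ i, (αp i + αm i) = 1)
    (x : Fin d → ℝ) (hx : ∑ i, |x i| = 1) :
    (⨆ θ : Fin d → ℝ, (∑ i, θ i * x i -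
        Real.log (∑ i, (αp i * Real.exp (θ i) + αm i * Real.exp (-θ i))))) =
      ∑ i, |x i| * Real.log (|x i| / (if 0 ≤ x i then αp i else αm i)) := by
  have hub := stmt17_ub d hd αp αm hp hm x hx
  have hbdd : BddAbove (Set.range fun θ : Fin d → ℝ => (∑ i, θ i * x i -
      Real.log (∑ i, (αp i * Real.exp (θ i) + αm i * Real.exp (-θ i))))) := by
    refine ⟨∑ i, |x i| * Real.log (|x i| / (if 0 ≤ x i then αp i else αm i)), ?_⟩
    rintro y ⟨θ, rfl⟩
    exact hub θ
  apply le_antisymm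
  · exact ciSup_le hub
  · apply le_of_forall_sub_le
    intro ε hε
    obtain ⟨θ, hθ⟩ := stmt17_lb d hd αp αm hp hm x hx ε hε
    exact hθ.trans (le_ciSup hbdd θ)
end
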